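/- Fix an initial state x ∈ ℝ^{n_x}, matrices K_0, …, K_{N-1} ∈ ℝ^{n_u×n_x}, vectors b_0, …, b_{N-1} ∈ ℝ^{n_u}, and pairs (Y_k, y_k) ∈ ℝ^{n_w×n_s} × ℝ^{n_w} (k = 0, …, N-1). Consider, for s = (s_0, …, s_{N-1}) ∈ ℝ^{N n_s}, the state-feedback closed-loop trajectory x_0(s) = x, x_{k+1}(s) = A x_k(s) + B(K_k x_k(s) + b_k) + E(Y_k s_k + y_k). Then there exist vectors p_k ∈ ℝ^{n_u} and matrices P_{k,j} ∈ ℝ^{n_u×n_s} (0 ≤ j < k ≤ N-1) such that for every s ∈ ℝ^{N n_s} and every k, the affine disturbance feedback input p_k + Σ_{j<k} P_{k,j} s_j equals K_k x_k(s) + b_k; consequently the affine disturbance feedback policy generates exactly the same state and input trajectories as the affine state feedback policy. -/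

import Mathlib

/-- The affine disturbance feedback input `u_k(s) = p_k + ∑_{j<k} P_{k,j} s_j`. -/
def affInput {nu ns : ℕ} (p : ℕ → Fin nu → ℝ) (P : ℕ → ℕ → Matrix (Fin nu) (Fin ns) ℝ)
    (s : ℕ → Fin ns → ℝ) (k : ℕ) : Fin nu → ℝ :=
  p k + ∑ j ∈ Finset.range k, (P k j).mulVec (s j)

/-- Trajectory `x_0(s) = x`, `x_{k+1}(s) = A x_k(s) + B u_k(s) + E (Y_k s_k + y_k)`
under the affine disturbance feedback policy. -/
def affTraj {nx nu nw ns : ℕ} (A : Matrix (Fin nx) (Fin nx) ℝ)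
    (B : Matrix (Fin nx) (Fin nu) ℝ) (E : Matrix (Fin nx) (Fin nw) ℝ)
    (p : ℕ → Fin nu → ℝ) (P : ℕ → ℕ → Matrix (Fin nu) (Fin ns) ℝ)
    (Ym : ℕ → Matrix (Fin nw) (Fin ns) ℝ) (yv : ℕ → Fin nw → ℝ)
    (x : Fin nx → ℝ) (s : ℕ → Fin ns → ℝ) : ℕ → Fin nx → ℝ
  | 0 => x
  | k + 1 =>
      A.mulVec (affTraj A B E p P Ym yv x s k) + B.mulVec (affInput p P s k) +
        E.mulVec ((Ym k).mulVec (s k) + yv k)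

/-- Closed-loop trajectory under the affine state feedback policy `u_k = K_k x_k + b_k`:
`x_0(s) = x`, `x_{k+1}(s) = A x_k(s) + B (K_k x_k(s) + b_k) + E (Y_k s_k + y_k)`. -/
def sfTraj {nx nu nw ns : ℕ} (A : Matrix (Fin nx) (Fin nx) ℝ)
    (B : Matrix (Fin nx) (Fin nu) ℝ) (E : Matrix (Fin nx) (Fin nw) ℝ)
    (K : ℕ → Matrix (Fin nu) (Fin nx) ℝ) (b : ℕ → Fin nu → ℝ)
    (Ym : ℕ → Matrix (Fin nw) (Fin ns) ℝ) (yv : ℕ → Fin nw → ℝ)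
    (x : Fin nx → ℝ) (s : ℕ → Fin ns → ℝ) : ℕ → Fin nx → ℝ
  | 0 => x
  | k + 1 =>
      A.mulVec (sfTraj A B E K b Ym yv x s k) +
        B.mulVec ((K k).mulVec (sfTraj A B E K b Ym yv x s k) + b k) +
        E.mulVec ((Ym k).mulVec (s k) + yv k)


lemma mulVec_finsum {m n : ℕ} (M : Matrix (Fin m) (Fin n) ℝ) {ι : Type*} (t : Finset ι)
    (f : ι → Fin n → ℝ) : M.mulVec (∑ j ∈ t, f j) = ∑ j ∈ t, M.mulVec (f j) := by
  simp only [← Matrix.mulVecLin_apply, map_sum]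

/-- Constant (disturbance-free) part of the state-feedback trajectory. -/
def vAux {nx nu nw : ℕ} (A : Matrix (Fin nx) (Fin nx) ℝ)
    (B : Matrix (Fin nx) (Fin nu) ℝ) (E : Matrix (Fin nx) (Fin nw) ℝ)
    (K : ℕ → Matrix (Fin nu) (Fin nx) ℝ) (b : ℕ → Fin nu → ℝ)
    (yv : ℕ → Fin nw → ℝ) (x : Fin nx → ℝ) : ℕ → Fin nx → ℝ
  | 0 => x
  | k + 1 =>
      A.mulVec (vAux A B E K b yv x k) +
        B.mulVec ((K k).mulVec (vAux A B E K b yv x k) + b k) + E.mulVec (yv k)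

/-- Sensitivity matrices of the state-feedback trajectory w.r.t. the primitives. -/
def XAux {nx nu nw ns : ℕ} (A : Matrix (Fin nx) (Fin nx) ℝ)
    (B : Matrix (Fin nx) (Fin nu) ℝ) (E : Matrix (Fin nx) (Fin nw) ℝ)
    (K : ℕ → Matrix (Fin nu) (Fin nx) ℝ)
    (Ym : ℕ → Matrix (Fin nw) (Fin ns) ℝ) : ℕ → ℕ → Matrix (Fin nx) (Fin ns) ℝ
  | 0, _ => 0
  | k + 1, j => if j = k then E * Ym k else (A + B * K k) * XAux A B E K Ym k j

lemma sfTraj_affine {nx nu nw ns : ℕ} (A : Matrix (Fin nx) (Fin nx) ℝ)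
    (B : Matrix (Fin nx) (Fin nu) ℝ) (E : Matrix (Fin nx) (Fin nw) ℝ)
    (K : ℕ → Matrix (Fin nu) (Fin nx) ℝ) (b : ℕ → Fin nu → ℝ)
    (Ym : ℕ → Matrix (Fin nw) (Fin ns) ℝ) (yv : ℕ → Fin nw → ℝ)
    (x : Fin nx → ℝ) (s : ℕ → Fin ns → ℝ) (k : ℕ) :
    sfTraj A B E K b Ym yv x s k =
      vAux A B E K b yv x k +
        ∑ j ∈ Finset.range k, (XAux A B E K Ym k j).mulVec (s j) := by
  induction k with
  | zero => simp [sfTraj, vAux]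
  | succ k ih =>
      rw [sfTraj, ih]
      rw [Finset.sum_range_succ]
      have hsum : ∀ j ∈ Finset.range k,
          (XAux A B E K Ym (k+1) j).mulVec (s j) =
            A.mulVec ((XAux A B E K Ym k j).mulVec (s j)) +
              B.mulVec ((K k).mulVec ((XAux A B E K Ym k j).mulVec (s j))) := by
        intro j hj
        have hjk : j ≠ k := Nat.ne_of_lt (Finset.mem_range.mp hj)
        simp [XAux, hjk, Matrix.add_mulVec, ← Matrix.mulVec_mulVec]
      rw [Finset.sum_congr rfl hsum]
      simp only [XAux, if_pos rfl, vAux, Matrix.mulVec_add, ← Matrix.mulVec_mulVec,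
        Finset.sum_add_distrib, mulVec_finsum]
      rw [Matrix.mulVec_mulVec (s k) E (Ym k)]
      ac_rfl

/-- every affine state feedback policy `u_k = K_k x_k + b_k` can be
represented as an affine disturbance feedback policy `u_k = p_k + ∑_{j<k} P_{k,j} s_j`:
the generated inputs coincide for every primitive sequence `s`, and consequently the
state trajectories coincide as well. -/
theorem stateFeedback_eq_disturbanceFeedback {nx nu nw ns : ℕ}
    (A : Matrix (Fin nx) (Fin nx) ℝ) (B : Matrix (Fin nx) (Fin nu) ℝ)
    (E : Matrix (Fin nx) (Fin nw) ℝ) (N : ℕ) (x : Fin nx → ℝ)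
    (K : ℕ → Matrix (Fin nu) (Fin nx) ℝ) (b : ℕ → Fin nu → ℝ)
    (Ym : ℕ → Matrix (Fin nw) (Fin ns) ℝ) (yv : ℕ → Fin nw → ℝ) :
    ∃ (p : ℕ → Fin nu → ℝ) (P : ℕ → ℕ → Matrix (Fin nu) (Fin ns) ℝ),
      ∀ s : ℕ → Fin ns → ℝ,
        (∀ k, k < N →
          affInput p P s k =
            (K k).mulVec (sfTraj A B E K b Ym yv x s k) + b k) ∧
        (∀ k, k ≤ N →
          affTraj A B E p P Ym yv x s k = sfTraj A B E K b Ym yv x s k) := by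
  refine ⟨fun k => (K k).mulVec (vAux A B E K b yv x k) + b k,
    fun k j => K k * XAux A B E K Ym k j, fun s => ?_⟩
  have hinput : ∀ k, affInput
      (fun k => (K k).mulVec (vAux A B E K b yv x k) + b k)
      (fun k j => K k * XAux A B E K Ym k j) s k =
      (K k).mulVec (sfTraj A B E K b Ym yv x s k) + b k := by
    intro k
    rw [sfTraj_affine]
    simp only [affInput, Matrix.mulVec_add, mulVec_finsum, ← Matrix.mulVec_mulVec]
    abel
  refine ⟨fun k _ => hinput k, fun k _ => ?_⟩
  clear * - hinput
  induction k with
  | zero => rfl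
  | succ k ih => rw [affTraj, sfTraj, ih, hinput k]
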